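/- Let (G,p) be an r-dimensional tensegrity framework in ℝ^r with configuration matrix P satisfying P^T e = 0. Then there exists a tensegrity framework (G,p') affinely-dominated by, but not congruent to, (G,p) if and only if there exists a non-zero symmetric r×r matrix Φ such that trace(F^{ij} P Φ P^T) = 0 for all bars {i,j} ∈ B, trace(F^{ij} P Φ P^T) ≤ 0 for all cables {i,j} ∈ C, and trace(F^{ij} P Φ P^T) ≥ 0 for all struts {i,j} ∈ S. -/

import Mathlib

open Matrix BigOperators

noncomputable section

/-- Squared Euclidean distance between two points of `ℝ^r`. -/
def sqDist {r : ℕ} (x y : Fin r → ℝ) : ℝ := ∑ k, (x k - y k) ^ 2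

/-- `(G,q)` is dominated by `(G,p)`, where the edges of `G` are partitioned into
bars `B`, cables `C` and struts `S`. -/
def Dominates {n r s : ℕ} (B C S : Set (Fin n × Fin n))
    (p : Fin n → Fin r → ℝ) (q : Fin n → Fin s → ℝ) : Prop :=
  (∀ e ∈ B, sqDist (q e.1) (q e.2) = sqDist (p e.1) (p e.2)) ∧
  (∀ e ∈ C, sqDist (q e.1) (q e.2) ≤ sqDist (p e.1) (p e.2)) ∧
  (∀ e ∈ S, sqDist (p e.1) (p e.2) ≤ sqDist (q e.1) (q e.2))

/-- `(G,q)` is congruent to `(G,p)`. -/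
def FrameworkCongruent {n r s : ℕ} (p : Fin n → Fin r → ℝ) (q : Fin n → Fin s → ℝ) : Prop :=
  ∀ i j, sqDist (q i) (q j) = sqDist (p i) (p j)

/-- `(G,p)` is universally rigid: every framework `(G,q)` in any dimension `s`
dominated by `(G,p)` is congruent to `(G,p)`. -/
def UniversallyRigid {n r : ℕ} (B C S : Set (Fin n × Fin n))
    (p : Fin n → Fin r → ℝ) : Prop :=
  ∀ (s : ℕ) (q : Fin n → Fin s → ℝ), Dominates B C S p q → FrameworkCongruent p q

/-- `(G,q)` is affinely-dominated by `(G,p)`: dominated and `q^i = A p^i + b`. -/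
def AffinelyDominated {n r : ℕ} (B C S : Set (Fin n × Fin n))
    (p q : Fin n → Fin r → ℝ) : Prop :=
  Dominates B C S p q ∧
  ∃ (A : Matrix (Fin r) (Fin r) ℝ) (b : Fin r → ℝ), ∀ i, q i = A.mulVec (p i) + b

/-- `ω` is an equilibrium stress of the framework with edge set `E` and configuration `p`. -/
def IsStress {n r : ℕ} (E : Set (Fin n × Fin n)) (p : Fin n → Fin r → ℝ)
    (ω : Fin n → Fin n → ℝ) : Prop :=
  (∀ i j, ω i j = ω j i) ∧ (∀ i j, (i, j) ∉ E → ω i j = 0) ∧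
  (∀ i : Fin n, ∑ j, ω i j • (p i - p j) = 0)

/-- A stress is proper if `ω_ij ≥ 0` on cables and `ω_ij ≤ 0` on struts. -/
def IsProperStress {n : ℕ} (C S : Set (Fin n × Fin n)) (ω : Fin n → Fin n → ℝ) : Prop :=
  (∀ e ∈ C, 0 ≤ ω e.1 e.2) ∧ (∀ e ∈ S, ω e.1 e.2 ≤ 0)

/-- The stress matrix `Ω` associated to the stress `ω`. -/
def stressMatrix {n : ℕ} (ω : Fin n → Fin n → ℝ) : Matrix (Fin n) (Fin n) ℝ :=
  Matrix.of fun i j => if i = j then ∑ k, ω i k else -ω i j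

/-- `B`, `C`, `S` are the (symmetrically encoded) bars, cables and struts of a
simple connected tensegrity graph on `{1,…,n}`. -/
def TensegrityGraph {n : ℕ} (B C S : Set (Fin n × Fin n)) : Prop :=
  (∀ i j, (i, j) ∈ B → (j, i) ∈ B) ∧ (∀ i j, (i, j) ∈ C → (j, i) ∈ C) ∧
  (∀ i j, (i, j) ∈ S → (j, i) ∈ S) ∧ (∀ i : Fin n, (i, i) ∉ B ∪ C ∪ S) ∧
  B ∩ C = ∅ ∧ B ∩ S = ∅ ∧ C ∩ S = ∅ ∧
  (SimpleGraph.fromRel fun i j => (i, j) ∈ B ∪ C ∪ S).Connected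

/-- A set of points of `ℝ^r` is in general position if every `r+1` of them are
affinely independent. -/
def SetInGeneralPosition {r : ℕ} (A : Set (Fin r → ℝ)) : Prop :=
  ∀ T : Finset (Fin r → ℝ), ↑T ⊆ A → T.card = r + 1 →
    AffineIndependent ℝ (fun x : {x // x ∈ T} => (x : Fin r → ℝ))

/-- `Z` is a Gale matrix of the configuration with matrix `P`: its columns form a
basis of the null space of the matrix obtained by stacking `Pᵀ` on top of `eᵀ`. -/
def IsGaleMatrix {n r m : ℕ} (P : Matrix (Fin n) (Fin r) ℝ)
    (Z : Matrix (Fin n) (Fin m) ℝ) : Prop :=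
  (∀ k, Pᵀ *ᵥ (fun i => Z i k) = 0) ∧ (∀ k, ∑ i, Z i k = 0) ∧
  LinearIndependent ℝ (fun k i => Z i k) ∧
  ∀ v : Fin n → ℝ, Pᵀ *ᵥ v = 0 → ∑ i, v i = 0 →
    v ∈ Submodule.span ℝ (Set.range fun k i => Z i k)

/-- `Ω` is a stress matrix of the framework with edge set `E` and configuration
matrix `P` (with centroid at the origin): it is symmetric, vanishes on missing
edges, and satisfies `Pᵀ Ω = 0` and `Ω e = 0`. -/
def IsStressMatrix {n r : ℕ} (E : Set (Fin n × Fin n)) (P : Matrix (Fin n) (Fin r) ℝ)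
    (Ω : Matrix (Fin n) (Fin n) ℝ) : Prop :=
  Ω.IsSymm ∧ (∀ i j, i ≠ j → (i, j) ∉ E → Ω i j = 0) ∧
  Pᵀ * Ω = 0 ∧ Ω *ᵥ (fun _ => (1 : ℝ)) = 0

/-- The matrix `F^{ij} = (e^i - e^j)(e^i - e^j)ᵀ`. -/
def Fmat {n : ℕ} (i j : Fin n) : Matrix (Fin n) (Fin n) ℝ :=
  Matrix.vecMulVec (Pi.single i 1 - Pi.single j 1) (Pi.single i 1 - Pi.single j 1)

/-- The matrix `E^{ij} = e^i (e^j)ᵀ + e^j (e^i)ᵀ`. -/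
def Emat {n : ℕ} (i j : Fin n) : Matrix (Fin n) (Fin n) ℝ :=
  Matrix.vecMulVec (Pi.single i 1) (Pi.single j 1) +
    Matrix.vecMulVec (Pi.single j 1) (Pi.single i 1)

/-- The matrix `L^i = e^i eᵀ + e (e^i)ᵀ`. -/
def Lmat {n : ℕ} (i : Fin n) : Matrix (Fin n) (Fin n) ℝ :=
  Matrix.vecMulVec (Pi.single i 1) (fun _ => 1) +
    Matrix.vecMulVec (fun _ => 1) (Pi.single i 1)

/-- `ℰ(y) = Σ y_ij E^{ij}` (for `y` supported on the relevant pairs `i < j`). -/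
def EscrY {n : ℕ} (y : Fin n → Fin n → ℝ) : Matrix (Fin n) (Fin n) ℝ :=
  ∑ i, ∑ j, y i j • Emat i j

/-- The vector `x = -(1/n) ℰ(y) e + (1/(2n²)) (eᵀ ℰ(y) e) e`. -/
def xvec {n : ℕ} (y : Fin n → Fin n → ℝ) : Fin n → ℝ :=
  (-(1 / (n : ℝ))) • (EscrY y *ᵥ fun _ => (1 : ℝ)) +
    ((1 / (2 * (n : ℝ) ^ 2)) * ((fun _ => (1 : ℝ)) ⬝ᵥ (EscrY y *ᵥ fun _ => (1 : ℝ)))) •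
      (fun _ : Fin n => (1 : ℝ))


section Aux

lemma sqDist_eq' {r : ℕ} (x y : Fin r → ℝ) : sqDist x y = (x - y) ⬝ᵥ (x - y) := by
  simp [sqDist, dotProduct, sq]

lemma trace_fmat_mul' {n : ℕ} (i j : Fin n) (M : Matrix (Fin n) (Fin n) ℝ) :
    (Fmat i j * M).trace = M i i + M j j - M i j - M j i := by
  simp only [Matrix.trace, Matrix.diag, Matrix.mul_apply, Fmat, Matrix.vecMulVec_apply,
    Pi.sub_apply, Pi.single_apply, sub_mul, mul_sub, ite_mul, one_mul, zero_mul,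
    mul_ite, mul_one, mul_zero, Finset.sum_sub_distrib, Finset.sum_ite_eq,
    Finset.sum_ite_eq', Finset.mem_univ, if_true]
  ring

lemma entry_PPhiPT' {n r : ℕ} (p : Fin n → Fin r → ℝ) (Φ : Matrix (Fin r) (Fin r) ℝ)
    (a b : Fin n) :
    (Matrix.of p * Φ * (Matrix.of p)ᵀ) a b = p a ⬝ᵥ Φ *ᵥ p b := by
  simp only [Matrix.mul_apply, Matrix.transpose_apply, Matrix.of_apply, dotProduct,
    Matrix.mulVec, dotProduct, Finset.sum_mul, Finset.mul_sum]
  rw [Finset.sum_comm]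
  exact Finset.sum_congr rfl fun k _ => Finset.sum_congr rfl fun l _ => by ring

lemma trace_Fmat' {n r : ℕ} (p : Fin n → Fin r → ℝ) (Φ : Matrix (Fin r) (Fin r) ℝ)
    (hΦ : Φ.IsSymm) (i j : Fin n) :
    (Fmat i j * (Matrix.of p * Φ * (Matrix.of p)ᵀ)).trace
      = (p i - p j) ⬝ᵥ Φ *ᵥ (p i - p j) := by
  have hsym : ∀ a b : Fin n, p a ⬝ᵥ Φ *ᵥ p b = p b ⬝ᵥ Φ *ᵥ p a := by
    intro a b
    rw [dotProduct_mulVec, ← Matrix.mulVec_transpose, hΦ.eq, dotProduct_comm]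
  rw [trace_fmat_mul', entry_PPhiPT', entry_PPhiPT', entry_PPhiPT', entry_PPhiPT',
    Matrix.mulVec_sub, dotProduct_sub, sub_dotProduct, sub_dotProduct, hsym j i]
  ring

lemma sq_shift' {n r : ℕ} (p q : Fin n → Fin r → ℝ) (A : Matrix (Fin r) (Fin r) ℝ)
    (b : Fin r → ℝ) (hq : ∀ i, q i = A.mulVec (p i) + b) (i j : Fin n) :
    sqDist (q i) (q j) = sqDist (p i) (p j) + (p i - p j) ⬝ᵥ ((Aᵀ * A - 1) *ᵥ (p i - p j)) := by
  have hd : q i - q j = A *ᵥ (p i - p j) := by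
    rw [hq, hq, Matrix.mulVec_sub]; abel
  have h1 : (p i - p j) ⬝ᵥ ((Aᵀ * A) *ᵥ (p i - p j))
      = (A *ᵥ (p i - p j)) ⬝ᵥ (A *ᵥ (p i - p j)) := by
    rw [← Matrix.mulVec_mulVec, dotProduct_mulVec, Matrix.vecMul_transpose]
  rw [sqDist_eq', sqDist_eq', hd, Matrix.sub_mulVec, Matrix.one_mulVec, ← h1]
  simp only [dotProduct_add, dotProduct_sub, dotProduct_neg]
  ring

lemma phi_eq_zero' {n r : ℕ} (p : Fin n → Fin r → ℝ)
    (hdim : affineSpan ℝ (Set.range p) = ⊤) (Φ : Matrix (Fin r) (Fin r) ℝ)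
    (hΦ : Φ.IsSymm) (hq : ∀ i j, (p i - p j) ⬝ᵥ Φ *ᵥ (p i - p j) = 0) : Φ = 0 := by
  have hsymB : ∀ x y : Fin r → ℝ, x ⬝ᵥ Φ *ᵥ y = y ⬝ᵥ Φ *ᵥ x := by
    intro x y
    rw [dotProduct_mulVec, ← Matrix.mulVec_transpose, hΦ.eq, dotProduct_comm]
  have hvs : Submodule.span ℝ (Set.range p -ᵥ Set.range p) = ⊤ := by
    have h := AffineSubspace.vectorSpan_eq_top_of_affineSpan_eq_top (k := ℝ)
      (V := Fin r → ℝ) (P := Fin r → ℝ) hdim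
    rwa [vectorSpan_def] at h
  have hstep1 : ∀ i j l, (p i - p j) ⬝ᵥ Φ *ᵥ (p j - p l) = 0 := by
    intro i j l
    have h := hq i l
    have e : p i - p l = (p i - p j) + (p j - p l) := by abel
    rw [e] at h
    simp only [Matrix.mulVec_add, dotProduct_add, add_dotProduct] at h
    have h1 := hq i j
    have h2 := hq j l
    have h3 := hsymB (p j - p l) (p i - p j)
    linarith
  have hD : ∀ x ∈ Set.range p -ᵥ Set.range p, ∀ y ∈ Set.range p -ᵥ Set.range p,
      x ⬝ᵥ Φ *ᵥ y = 0 := by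
    rintro x hx y hy
    obtain ⟨a, ⟨i, rfl⟩, c, ⟨j, rfl⟩, rfl⟩ := hx
    obtain ⟨b, ⟨k, rfl⟩, d, ⟨l, rfl⟩, rfl⟩ := hy
    simp only [vsub_eq_sub]
    have e : p k - p l = (p j - p l) - (p j - p k) := by abel
    rw [e, Matrix.mulVec_sub, dotProduct_sub, hstep1 i j l, hstep1 i j k, sub_zero]
  have hall : ∀ x y : Fin r → ℝ, x ⬝ᵥ Φ *ᵥ y = 0 := by
    intro x y
    have hx : x ∈ Submodule.span ℝ (Set.range p -ᵥ Set.range p) := hvs ▸ Submodule.mem_top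
    have hy : y ∈ Submodule.span ℝ (Set.range p -ᵥ Set.range p) := hvs ▸ Submodule.mem_top
    induction hx, hy using Submodule.span_induction₂ with
    | mem_mem a b ha hb => exact hD a ha b hb
    | zero_left => simp
    | zero_right => simp [Matrix.mulVec_zero]
    | add_left a b c _ _ _ h1 h2 => simp [add_dotProduct, h1, h2]
    | add_right a b c _ _ _ h1 h2 => simp [Matrix.mulVec_add, dotProduct_add, h1, h2]
    | smul_left t a b _ _ h1 => simp [smul_dotProduct, h1]
    | smul_right t a b _ _ h1 => simp [Matrix.mulVec_smul, dotProduct_smul, h1]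
  ext k l
  have h := hall (Pi.single k 1) (Pi.single l 1)
  simpa [dotProduct, Matrix.mulVec, Pi.single_apply, Finset.sum_ite_eq,
    Finset.sum_ite_eq'] using h

lemma quad_abs_le' {r : ℕ} (Φ : Matrix (Fin r) (Fin r) ℝ) (x : Fin r → ℝ) :
    |x ⬝ᵥ Φ *ᵥ x| ≤ (∑ k, ∑ l, |Φ k l|) * (∑ m, x m ^ 2) := by
  set s := ∑ m, x m ^ 2 with hs
  have hsn : 0 ≤ s := Finset.sum_nonneg fun m _ => sq_nonneg _
  have hxx : ∀ k l : Fin r, |x k * x l| ≤ s := by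
    intro k l
    have h1 : x k ^ 2 ≤ s := Finset.single_le_sum (f := fun m => x m ^ 2)
      (fun m _ => sq_nonneg _) (Finset.mem_univ k)
    have h2 : x l ^ 2 ≤ s := Finset.single_le_sum (f := fun m => x m ^ 2)
      (fun m _ => sq_nonneg _) (Finset.mem_univ l)
    rw [abs_le]
    constructor <;> nlinarith [sq_nonneg (x k + x l), sq_nonneg (x k - x l)]
  have hquad : x ⬝ᵥ Φ *ᵥ x = ∑ k, ∑ l, x k * (Φ k l * x l) := by
    simp [dotProduct, Matrix.mulVec, Finset.mul_sum]
  rw [hquad]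
  calc |∑ k, ∑ l, x k * (Φ k l * x l)| ≤ ∑ k, ∑ l, |Φ k l| * s := by
        refine (Finset.abs_sum_le_sum_abs _ _).trans (Finset.sum_le_sum fun k _ =>
          (Finset.abs_sum_le_sum_abs _ _).trans (Finset.sum_le_sum fun l _ => ?_))
        have : |x k * (Φ k l * x l)| = |Φ k l| * |x k * x l| := by
          rw [← abs_mul]; congr 1; ring
        rw [this]
        exact mul_le_mul_of_nonneg_left (hxx k l) (abs_nonneg _)
    _ = (∑ k, ∑ l, |Φ k l|) * s := by simp [Finset.sum_mul]

lemma psd_one_add' {r : ℕ} (Φ : Matrix (Fin r) (Fin r) ℝ) (hΦ : Φ.IsSymm) :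
    ∃ t : ℝ, 0 < t ∧ (1 + t • Φ).PosSemidef := by
  set M := ∑ k, ∑ l, |Φ k l| with hM
  have hMn : 0 ≤ M := Finset.sum_nonneg fun k _ => Finset.sum_nonneg fun l _ => abs_nonneg _
  refine ⟨1 / (M + 1), by positivity, Matrix.posSemidef_iff_dotProduct_mulVec.2 ⟨?_, ?_⟩⟩
  · rw [Matrix.IsHermitian, Matrix.conjTranspose_eq_transpose_of_trivial,
      Matrix.transpose_add, Matrix.transpose_smul, hΦ.eq, Matrix.transpose_one]
  · intro x
    rw [star_trivial, Matrix.add_mulVec, Matrix.one_mulVec, dotProduct_add,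
      Matrix.smul_mulVec, dotProduct_smul, smul_eq_mul]
    have hb := quad_abs_le' Φ x
    have hd : x ⬝ᵥ x = ∑ m, x m ^ 2 := by simp [dotProduct, sq]
    have hsn : 0 ≤ ∑ m, x m ^ 2 := Finset.sum_nonneg fun m _ => sq_nonneg _
    rw [hd]
    rw [abs_le] at hb
    have ht : 0 < M + 1 := by linarith
    have h1 : 1 / (M + 1) * (x ⬝ᵥ Φ *ᵥ x) ≥ 1 / (M + 1) * (-(M * ∑ m, x m ^ 2)) := by
      apply mul_le_mul_of_nonneg_left _ (by positivity)
      linarith [hb.1]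
    have h2 : 1 / (M + 1) * (M * ∑ m, x m ^ 2) ≤ ∑ m, x m ^ 2 := by
      rw [div_mul_eq_mul_div, one_mul, div_le_iff₀ ht]
      nlinarith
    linarith

end Aux

/-- there is a framework affinely-dominated by but not congruent to
`(G,p)` iff there is a non-zero symmetric `Φ` with `trace (F^{ij} P Φ Pᵀ)` zero on
bars, `≤ 0` on cables and `≥ 0` on struts. -/
theorem statement13 {n r : ℕ}
    (B C S : Set (Fin n × Fin n)) (hG : TensegrityGraph B C S)
    (p : Fin n → Fin r → ℝ)
    (hdim : affineSpan ℝ (Set.range p) = ⊤)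
    (hcentroid : ∀ k, ∑ i, p i k = 0) :
    (∃ p' : Fin n → Fin r → ℝ,
        AffinelyDominated B C S p p' ∧ ¬ FrameworkCongruent p p') ↔
      ∃ Φ : Matrix (Fin r) (Fin r) ℝ, Φ ≠ 0 ∧ Φ.IsSymm ∧
        (∀ e ∈ B,
          (Fmat e.1 e.2 * (Matrix.of p * Φ * (Matrix.of p)ᵀ)).trace = 0) ∧
        (∀ e ∈ C,
          (Fmat e.1 e.2 * (Matrix.of p * Φ * (Matrix.of p)ᵀ)).trace ≤ 0) ∧
        (∀ e ∈ S,
          0 ≤ (Fmat e.1 e.2 * (Matrix.of p * Φ * (Matrix.of p)ᵀ)).trace) := by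
  constructor
  · rintro ⟨p', ⟨⟨hBd, hCd, hSd⟩, A, b, hq⟩, hnc⟩
    have hΦs : (Aᵀ * A - 1).IsSymm := by
      rw [Matrix.IsSymm, Matrix.transpose_sub, Matrix.transpose_mul,
        Matrix.transpose_transpose, Matrix.transpose_one]
    have key : ∀ i j : Fin n, (Fmat i j * (Matrix.of p * (Aᵀ * A - 1) * (Matrix.of p)ᵀ)).trace
        = sqDist (p' i) (p' j) - sqDist (p i) (p j) := by
      intro i j
      rw [trace_Fmat' p _ hΦs, sq_shift' p p' A b hq i j]
      ring
    refine ⟨Aᵀ * A - 1, ?_, hΦs, ?_, ?_, ?_⟩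
    · intro h0
      apply hnc
      intro i j
      have h := sq_shift' p p' A b hq i j
      rw [h0, Matrix.zero_mulVec, dotProduct_zero, add_zero] at h
      exact h
    · intro e he; rw [key, sub_eq_zero]; exact hBd e he
    · intro e he; rw [key, sub_nonpos]; exact hCd e he
    · intro e he; rw [key, sub_nonneg]; exact hSd e he
  · rintro ⟨Φ, hne, hΦ, hBc, hCc, hSc⟩
    obtain ⟨t, ht, hPSD⟩ := psd_one_add' Φ hΦ
    obtain ⟨A, hA⟩ : ∃ A : Matrix (Fin r) (Fin r) ℝ, Aᵀ * A = 1 + t • Φ := by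
      open scoped MatrixOrder in
      obtain ⟨B, hB⟩ := CStarAlgebra.nonneg_iff_eq_star_mul_self.mp hPSD.nonneg
      exact ⟨B, hB.symm⟩
    have hAA : Aᵀ * A - 1 = t • Φ := by
      rw [hA, add_sub_cancel_left]
    set q : Fin n → Fin r → ℝ := fun i => A *ᵥ p i with hqdef
    have hq : ∀ i, q i = A *ᵥ p i + 0 := by intro i; simp [hqdef]
    have hshift : ∀ i j, sqDist (q i) (q j)
        = sqDist (p i) (p j) + t * ((p i - p j) ⬝ᵥ Φ *ᵥ (p i - p j)) := by
      intro i j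
      rw [sq_shift' p q A 0 hq i j, hAA, Matrix.smul_mulVec, dotProduct_smul,
        smul_eq_mul]
    obtain ⟨i0, j0, hq0⟩ : ∃ i j, (p i - p j) ⬝ᵥ Φ *ᵥ (p i - p j) ≠ 0 := by
      by_contra h
      push_neg at h
      exact hne (phi_eq_zero' p hdim Φ hΦ fun i j => h i j)
    refine ⟨q, ⟨⟨?_, ?_, ?_⟩, ⟨A, 0, hq⟩⟩, ?_⟩
    · intro e he
      have h := hBc e he
      rw [trace_Fmat' p Φ hΦ] at h
      rw [hshift, h, mul_zero, add_zero]
    · intro e he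
      have h := hCc e he
      rw [trace_Fmat' p Φ hΦ] at h
      rw [hshift]
      nlinarith
    · intro e he
      have h := hSc e he
      rw [trace_Fmat' p Φ hΦ] at h
      rw [hshift]
      nlinarith
    · intro hc
      have h := hc i0 j0
      rw [hshift] at h
      have h0 : t * ((p i0 - p j0) ⬝ᵥ Φ *ᵥ (p i0 - p j0)) = 0 := by linarith
      rcases mul_eq_zero.1 h0 with h' | h'
      · exact absurd h' (ne_of_gt ht)
      · exact hq0 h'
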